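/- arXiv:2111.10915 — 3 statements merged into one kernel-verified Lean document; each statement's English description precedes it below -/
import Mathlib

section
/- Let M be a real 4d×4d matrix that is symplectic, i.e. Mᵀ J_{4d} M = J_{4d}. Let v, w ∈ ℝ^{4d} satisfy A M v = -A v and A M w = -A w. Then (Mv)ᵀ X (Mw) = vᵀ X w, where X = J_{4d} - Aᵀ J_{2d} A. -/
open Matrix Kronecker

/-- The block matrix `A = [[I, -I, 0, 0], [0, 0, I, -I]]` (2d × 4d). -/
noncomputable def Amat (d : ℕ) : Matrix (Fin 2 × Fin d) (Fin 4 × Fin d) ℝ :=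
  (!![1, -1, 0, 0; 0, 0, 1, -1] : Matrix (Fin 2) (Fin 4) ℝ) ⊗ₖ (1 : Matrix (Fin d) (Fin d) ℝ)

/-- The standard symplectic matrix `J_{2d} = [[0, I],[-I, 0]]` in coordinates (q,p). -/
noncomputable def J2mat (d : ℕ) : Matrix (Fin 2 × Fin d) (Fin 2 × Fin d) ℝ :=
  (!![0, 1; -1, 0] : Matrix (Fin 2) (Fin 2) ℝ) ⊗ₖ (1 : Matrix (Fin d) (Fin d) ℝ)

/-- The symplectic matrix `J_{4d}` in coordinates ordered (q,x,p,y). -/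
noncomputable def J4mat (d : ℕ) : Matrix (Fin 4 × Fin d) (Fin 4 × Fin d) ℝ :=
  (!![0, 0, 1, 0; 0, 0, 0, 1; -1, 0, 0, 0; 0, -1, 0, 0] : Matrix (Fin 4) (Fin 4) ℝ) ⊗ₖ
    (1 : Matrix (Fin d) (Fin d) ℝ)

/-- `X = [[0,0,0,I],[0,0,I,0],[0,-I,0,0],[-I,0,0,0]]` in coordinates (q,x,p,y). -/
noncomputable def Xmat (d : ℕ) : Matrix (Fin 4 × Fin d) (Fin 4 × Fin d) ℝ :=
  (!![0, 0, 0, 1; 0, 0, 1, 0; 0, -1, 0, 0; -1, 0, 0, 0] : Matrix (Fin 4) (Fin 4) ℝ) ⊗ₖ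
    (1 : Matrix (Fin d) (Fin d) ℝ)


/-- If `M` is symplectic and `v, w` satisfy `A M v = -A v`, `A M w = -A w`, then
`(Mv)ᵀ X (Mw) = vᵀ X w`, where `X = J_{4d} - Aᵀ J_{2d} A` (see `Xmat`). -/
theorem symplectic_preserves_X (d : ℕ) (M : Matrix (Fin 4 × Fin d) (Fin 4 × Fin d) ℝ)
    (v w : Fin 4 × Fin d → ℝ)
    (hM : Mᵀ * J4mat d * M = J4mat d)
    (hv : (Amat d).mulVec (M.mulVec v) = -((Amat d).mulVec v))
    (hw : (Amat d).mulVec (M.mulVec w) = -((Amat d).mulVec w)) :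
    M.mulVec v ⬝ᵥ (Xmat d).mulVec (M.mulVec w) = v ⬝ᵥ (Xmat d).mulVec w := by
  -- X = J4 - Aᵀ J2 A
  have hX : Xmat d = J4mat d - (Amat d)ᵀ * (J2mat d * Amat d) := by
    unfold Xmat J4mat J2mat Amat
    rw [show ((!![1, -1, 0, 0; 0, 0, 1, -1] : Matrix (Fin 2) (Fin 4) ℝ) ⊗ₖ
        (1 : Matrix (Fin d) (Fin d) ℝ))ᵀ
        = (!![1, -1, 0, 0; 0, 0, 1, -1] : Matrix (Fin 2) (Fin 4) ℝ)ᵀ ⊗ₖ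
          (1 : Matrix (Fin d) (Fin d) ℝ) by
        rw [← Matrix.kroneckerMap_transpose, Matrix.transpose_one],
      ← Matrix.mul_kronecker_mul, ← Matrix.mul_kronecker_mul]
    have hP : ((!![1, -1, 0, 0; 0, 0, 1, -1] : Matrix (Fin 2) (Fin 4) ℝ)ᵀ *
        ((!![0, 1; -1, 0] : Matrix (Fin 2) (Fin 2) ℝ) *
          (!![1, -1, 0, 0; 0, 0, 1, -1] : Matrix (Fin 2) (Fin 4) ℝ)))
        = (!![0, 0, 1, -1; 0, 0, -1, 1; -1, 1, 0, 0; 1, -1, 0, 0] :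
            Matrix (Fin 4) (Fin 4) ℝ) := by
      ext i j
      fin_cases i <;> fin_cases j <;>
        norm_num [Matrix.mul_apply, Fin.sum_univ_two, Matrix.transpose, Matrix.vecHead,
          Matrix.vecTail, Matrix.of_apply, Function.comp]
    rw [hP]
    ext ⟨i, k⟩ ⟨j, l⟩
    fin_cases i <;> fin_cases j <;>
      simp [Matrix.kroneckerMap_apply, Matrix.sub_apply, Matrix.vecHead, Matrix.vecTail,
        Function.comp]
  have key : ∀ (a b : Fin 4 × Fin d → ℝ),
      a ⬝ᵥ ((Amat d)ᵀ * (J2mat d * Amat d)).mulVec b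
        = (Amat d).mulVec a ⬝ᵥ (J2mat d).mulVec ((Amat d).mulVec b) := by
    intro a b
    rw [← Matrix.mulVec_mulVec, ← Matrix.mulVec_mulVec, Matrix.dotProduct_mulVec,
      ← Matrix.mulVec_transpose, Matrix.transpose_transpose]
  have keyJ : ∀ (a b : Fin 4 × Fin d → ℝ),
      M.mulVec a ⬝ᵥ (J4mat d).mulVec (M.mulVec b) = a ⬝ᵥ (J4mat d).mulVec b := by
    intro a b
    conv_rhs => rw [← hM, Matrix.mul_assoc, ← Matrix.mulVec_mulVec,
      Matrix.dotProduct_mulVec, Matrix.vecMul_transpose, ← Matrix.mulVec_mulVec]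
  rw [hX, Matrix.sub_mulVec, dotProduct_sub, Matrix.sub_mulVec, dotProduct_sub,
    keyJ, key, key, hv, hw]
  simp [Matrix.mulVec_neg, dotProduct_neg, ← Matrix.mulVec_mulVec]
end

section
/- Let ι : ℝ^{2d} → ℝ^{4d} be the linear map ι(q,p) = (q,q,p,p) and let L : ℝ^{2d} → ℝ^{2d} be any linear map. Set S = ι + Aᵀ L (as a 4d×2d matrix). Then Sᵀ (J_{4d} + X) S = 4 J_{2d}. -/
open Matrix Kronecker

/-- The inclusion `ι(q,p) = (q,q,p,p)` as a 4d × 2d matrix. -/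
noncomputable def iotaMat (d : ℕ) : Matrix (Fin 4 × Fin d) (Fin 2 × Fin d) ℝ :=
  (!![1, 0; 1, 0; 0, 1; 0, 1] : Matrix (Fin 4) (Fin 2) ℝ) ⊗ₖ (1 : Matrix (Fin d) (Fin d) ℝ)

/-- For any linear map `L : ℝ^{2d} → ℝ^{2d}` and `S = ι + Aᵀ L`, one has
`Sᵀ (J_{4d} + X) S = 4 J_{2d}`. -/
theorem St_J4_plus_X_S (d : ℕ) (L : Matrix (Fin 2 × Fin d) (Fin 2 × Fin d) ℝ)
    (S : Matrix (Fin 4 × Fin d) (Fin 2 × Fin d) ℝ)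
    (hS : S = iotaMat d + (Amat d)ᵀ * L) :
    Sᵀ * (J4mat d + Xmat d) * S = (4 : ℝ) • J2mat d := by
  subst hS
  have hsmall : (!![0, 0, 1, 0; 0, 0, 0, 1; -1, 0, 0, 0; 0, -1, 0, 0] +
      !![0, 0, 0, 1; 0, 0, 1, 0; 0, -1, 0, 0; -1, 0, 0, 0] : Matrix (Fin 4) (Fin 4) ℝ) =
      !![0, 0, 1, 1; 0, 0, 1, 1; -1, -1, 0, 0; -1, -1, 0, 0] := by
    ext i j; fin_cases i <;> fin_cases j <;> norm_num
  have hM : J4mat d + Xmat d =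
      (!![0, 0, 1, 1; 0, 0, 1, 1; -1, -1, 0, 0; -1, -1, 0, 0] : Matrix (Fin 4) (Fin 4) ℝ) ⊗ₖ
        (1 : Matrix (Fin d) (Fin d) ℝ) := by
    rw [J4mat, Xmat, ← Matrix.add_kronecker, hsmall]
  have hAt : ((!![1, -1, 0, 0; 0, 0, 1, -1] : Matrix (Fin 2) (Fin 4) ℝ))ᵀ =
      !![1, 0; -1, 0; 0, 1; 0, -1] := by
    ext i j; fin_cases i <;> fin_cases j <;> rfl
  have hit : ((!![1, 0; 1, 0; 0, 1; 0, 1] : Matrix (Fin 4) (Fin 2) ℝ))ᵀ =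
      !![1, 1, 0, 0; 0, 0, 1, 1] := by
    ext i j; fin_cases i <;> fin_cases j <;> rfl
  have hAkt : (Amat d)ᵀ =
      (!![1, 0; -1, 0; 0, 1; 0, -1] : Matrix (Fin 4) (Fin 2) ℝ) ⊗ₖ
        (1 : Matrix (Fin d) (Fin d) ℝ) := by
    rw [Amat, ← Matrix.kroneckerMap_transpose, Matrix.transpose_one, hAt]
  have hiotat : (iotaMat d)ᵀ =
      (!![1, 1, 0, 0; 0, 0, 1, 1] : Matrix (Fin 2) (Fin 4) ℝ) ⊗ₖ
        (1 : Matrix (Fin d) (Fin d) ℝ) := by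
    rw [iotaMat, ← Matrix.kroneckerMap_transpose, Matrix.transpose_one, hit]
  have hMA : (J4mat d + Xmat d) * (Amat d)ᵀ = 0 := by
    rw [hM, hAkt, ← Matrix.mul_kronecker_mul, Matrix.one_mul]
    have h1 : (!![0, 0, 1, 1; 0, 0, 1, 1; -1, -1, 0, 0; -1, -1, 0, 0] : Matrix (Fin 4) (Fin 4) ℝ) *
        (!![1, 0; -1, 0; 0, 1; 0, -1] : Matrix (Fin 4) (Fin 2) ℝ) =
        (0 : Matrix (Fin 4) (Fin 2) ℝ) := by
      ext i j; fin_cases i <;> fin_cases j <;>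
        simp [Matrix.mul_apply, Fin.sum_univ_four, Matrix.vecHead, Matrix.vecTail, Matrix.smul_apply] <;> norm_num
    rw [h1, Matrix.zero_kronecker]
  have hAM : Amat d * (J4mat d + Xmat d) = 0 := by
    rw [hM, Amat, ← Matrix.mul_kronecker_mul, Matrix.one_mul]
    have h1 : (!![1, -1, 0, 0; 0, 0, 1, -1] : Matrix (Fin 2) (Fin 4) ℝ) *
        (!![0, 0, 1, 1; 0, 0, 1, 1; -1, -1, 0, 0; -1, -1, 0, 0] : Matrix (Fin 4) (Fin 4) ℝ) =
        (0 : Matrix (Fin 2) (Fin 4) ℝ) := by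
      ext i j; fin_cases i <;> fin_cases j <;>
        simp [Matrix.mul_apply, Fin.sum_univ_four, Matrix.vecHead, Matrix.vecTail, Matrix.smul_apply] <;> norm_num
    rw [h1, Matrix.zero_kronecker]
  have hiota : (iotaMat d)ᵀ * ((J4mat d + Xmat d) * iotaMat d) = (4 : ℝ) • J2mat d := by
    rw [hM, hiotat, iotaMat, ← Matrix.mul_kronecker_mul, Matrix.one_mul,
      ← Matrix.mul_kronecker_mul, Matrix.one_mul, J2mat, ← Matrix.smul_kronecker]
    have h1 : (!![1, 1, 0, 0; 0, 0, 1, 1] : Matrix (Fin 2) (Fin 4) ℝ) *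
        ((!![0, 0, 1, 1; 0, 0, 1, 1; -1, -1, 0, 0; -1, -1, 0, 0] : Matrix (Fin 4) (Fin 4) ℝ) *
          (!![1, 0; 1, 0; 0, 1; 0, 1] : Matrix (Fin 4) (Fin 2) ℝ)) =
        (4 : ℝ) • (!![0, 1; -1, 0] : Matrix (Fin 2) (Fin 2) ℝ) := by
      ext i j; fin_cases i <;> fin_cases j <;>
        simp [Matrix.mul_apply, Fin.sum_univ_four, Matrix.vecHead, Matrix.vecTail, Matrix.smul_apply] <;> norm_num
    rw [h1]
  calc (iotaMat d + (Amat d)ᵀ * L)ᵀ * (J4mat d + Xmat d) * (iotaMat d + (Amat d)ᵀ * L)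
      = (iotaMat d)ᵀ * ((J4mat d + Xmat d) * iotaMat d)
        + (iotaMat d)ᵀ * ((J4mat d + Xmat d) * (Amat d)ᵀ * L)
        + (Lᵀ * (Amat d * (J4mat d + Xmat d)) * iotaMat d
          + Lᵀ * (Amat d * (J4mat d + Xmat d)) * ((Amat d)ᵀ * L)) := by
        simp only [Matrix.transpose_add, Matrix.transpose_mul, Matrix.transpose_transpose,
          Matrix.add_mul, Matrix.mul_add, Matrix.mul_assoc]
        abel
  _ = (4 : ℝ) • J2mat d := by
        rw [hMA, hAM, hiota]
        simp
end

section
/- Linearized symplecticity of the semiexplicit method: Let M ∈ ℝ^{4d×4d} be symplectic (Mᵀ J_{4d} M = J_{4d}), let L : ℝ^{2d} → ℝ^{2d} be linear, and set S = ι + Aᵀ L. Assume that for every v ∈ ℝ^{2d}, A M S v = -A S v. Then the 2d×2d matrix T = (1/2) B M S is symplectic: Tᵀ J_{2d} T = J_{2d}. -/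
open Matrix Kronecker

/-- The block matrix `B = [[I, I, 0, 0], [0, 0, I, I]]` (2d × 4d). -/
noncomputable def Bmat (d : ℕ) : Matrix (Fin 2 × Fin d) (Fin 4 × Fin d) ℝ :=
  (!![1, 1, 0, 0; 0, 0, 1, 1] : Matrix (Fin 2) (Fin 4) ℝ) ⊗ₖ (1 : Matrix (Fin d) (Fin d) ℝ)

namespace SemiexplicitAux

variable {d : ℕ}

lemma kt {m n : ℕ} (P : Matrix (Fin m) (Fin n) ℝ) :
    (P ⊗ₖ (1 : Matrix (Fin d) (Fin d) ℝ))ᵀ = Pᵀ ⊗ₖ (1 : Matrix (Fin d) (Fin d) ℝ) := by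
  rw [← kroneckerMap_transpose, transpose_one]

lemma km {m n k : ℕ} (P : Matrix (Fin m) (Fin n) ℝ) (Q : Matrix (Fin n) (Fin k) ℝ) :
    (P ⊗ₖ (1 : Matrix (Fin d) (Fin d) ℝ)) * (Q ⊗ₖ (1 : Matrix (Fin d) (Fin d) ℝ))
      = (P * Q) ⊗ₖ (1 : Matrix (Fin d) (Fin d) ℝ) := by
  rw [← Matrix.mul_kronecker_mul, one_mul]

lemma ks {m n : ℕ} (r : ℝ) (P : Matrix (Fin m) (Fin n) ℝ) :
    (r • P) ⊗ₖ (1 : Matrix (Fin d) (Fin d) ℝ) = r • (P ⊗ₖ (1 : Matrix (Fin d) (Fin d) ℝ)) :=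
  Matrix.smul_kronecker r P 1

lemma hBJB (d : ℕ) : (Bmat d)ᵀ * J2mat d * Bmat d = J4mat d + Xmat d := by
  simp only [Bmat, J2mat, J4mat, Xmat, kt, km, ← Matrix.add_kronecker]
  have : (!![1, 1, 0, 0; 0, 0, 1, 1] : Matrix (Fin 2) (Fin 4) ℝ)ᵀ *
      (!![0, 1; -1, 0] : Matrix (Fin 2) (Fin 2) ℝ) *
      (!![1, 1, 0, 0; 0, 0, 1, 1] : Matrix (Fin 2) (Fin 4) ℝ)
      = (!![0, 0, 1, 0; 0, 0, 0, 1; -1, 0, 0, 0; 0, -1, 0, 0] : Matrix (Fin 4) (Fin 4) ℝ)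
        + !![0, 0, 0, 1; 0, 0, 1, 0; 0, -1, 0, 0; -1, 0, 0, 0] := by
    ext i j; fin_cases i <;> fin_cases j <;>
      norm_num [Matrix.mul_apply, Fin.sum_univ_succ, Matrix.vecHead, Matrix.vecTail]
  rw [this]

lemma hAJA (d : ℕ) : (Amat d)ᵀ * J2mat d * Amat d + Xmat d = J4mat d := by
  simp only [Amat, J2mat, J4mat, Xmat, kt, km, ← Matrix.add_kronecker]
  have : (!![1, -1, 0, 0; 0, 0, 1, -1] : Matrix (Fin 2) (Fin 4) ℝ)ᵀ *
      (!![0, 1; -1, 0] : Matrix (Fin 2) (Fin 2) ℝ) *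
      (!![1, -1, 0, 0; 0, 0, 1, -1] : Matrix (Fin 2) (Fin 4) ℝ)
      + (!![0, 0, 0, 1; 0, 0, 1, 0; 0, -1, 0, 0; -1, 0, 0, 0] : Matrix (Fin 4) (Fin 4) ℝ)
      = !![0, 0, 1, 0; 0, 0, 0, 1; -1, 0, 0, 0; 0, -1, 0, 0] := by
    ext i j; fin_cases i <;> fin_cases j <;>
      norm_num [Matrix.mul_apply, Fin.sum_univ_succ, Matrix.vecHead, Matrix.vecTail]
  rw [this]

lemma hAiota (d : ℕ) : Amat d * iotaMat d = 0 := by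
  simp only [Amat, iotaMat, km]
  have : (!![1, -1, 0, 0; 0, 0, 1, -1] : Matrix (Fin 2) (Fin 4) ℝ) *
      (!![1, 0; 1, 0; 0, 1; 0, 1] : Matrix (Fin 4) (Fin 2) ℝ) = 0 := by
    ext i j; fin_cases i <;> fin_cases j <;>
      norm_num [Matrix.mul_apply, Fin.sum_univ_succ, Matrix.vecHead, Matrix.vecTail]
  rw [this, Matrix.zero_kronecker]

lemma hAAT (d : ℕ) : Amat d * (Amat d)ᵀ = (2:ℝ) • (1 : Matrix (Fin 2 × Fin d) (Fin 2 × Fin d) ℝ) := by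
  simp only [Amat, kt, km]
  have : (!![1, -1, 0, 0; 0, 0, 1, -1] : Matrix (Fin 2) (Fin 4) ℝ) *
      (!![1, -1, 0, 0; 0, 0, 1, -1] : Matrix (Fin 2) (Fin 4) ℝ)ᵀ
      = (2:ℝ) • (1 : Matrix (Fin 2) (Fin 2) ℝ) := by
    ext i j; fin_cases i <;> fin_cases j <;>
      norm_num [Matrix.mul_apply, Fin.sum_univ_succ, Matrix.one_apply, Matrix.vecHead, Matrix.vecTail]
  rw [this, ks, ← Matrix.one_kronecker_one (α := ℝ) (m := Fin 2) (n := Fin d)]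

lemma hiXi (d : ℕ) : (iotaMat d)ᵀ * Xmat d * iotaMat d = (2:ℝ) • J2mat d := by
  simp only [iotaMat, Xmat, J2mat, kt, km]
  have : (!![1, 0; 1, 0; 0, 1; 0, 1] : Matrix (Fin 4) (Fin 2) ℝ)ᵀ *
      (!![0, 0, 0, 1; 0, 0, 1, 0; 0, -1, 0, 0; -1, 0, 0, 0] : Matrix (Fin 4) (Fin 4) ℝ) *
      (!![1, 0; 1, 0; 0, 1; 0, 1] : Matrix (Fin 4) (Fin 2) ℝ)
      = (2:ℝ) • (!![0, 1; -1, 0] : Matrix (Fin 2) (Fin 2) ℝ) := by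
    ext i j; fin_cases i <;> fin_cases j <;>
      norm_num [Matrix.mul_apply, Fin.sum_univ_succ, Matrix.vecHead, Matrix.vecTail]
  rw [this, ks]

lemma hiXA (d : ℕ) : (iotaMat d)ᵀ * Xmat d * (Amat d)ᵀ = 0 := by
  simp only [iotaMat, Xmat, Amat, kt, km]
  have : (!![1, 0; 1, 0; 0, 1; 0, 1] : Matrix (Fin 4) (Fin 2) ℝ)ᵀ *
      (!![0, 0, 0, 1; 0, 0, 1, 0; 0, -1, 0, 0; -1, 0, 0, 0] : Matrix (Fin 4) (Fin 4) ℝ) *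
      (!![1, -1, 0, 0; 0, 0, 1, -1] : Matrix (Fin 2) (Fin 4) ℝ)ᵀ = 0 := by
    ext i j; fin_cases i <;> fin_cases j <;>
      norm_num [Matrix.mul_apply, Fin.sum_univ_succ, Matrix.vecHead, Matrix.vecTail]
  rw [this, Matrix.zero_kronecker]

lemma hAXi (d : ℕ) : Amat d * Xmat d * iotaMat d = 0 := by
  simp only [iotaMat, Xmat, Amat, km]
  have : (!![1, -1, 0, 0; 0, 0, 1, -1] : Matrix (Fin 2) (Fin 4) ℝ) *
      (!![0, 0, 0, 1; 0, 0, 1, 0; 0, -1, 0, 0; -1, 0, 0, 0] : Matrix (Fin 4) (Fin 4) ℝ) *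
      (!![1, 0; 1, 0; 0, 1; 0, 1] : Matrix (Fin 4) (Fin 2) ℝ) = 0 := by
    ext i j; fin_cases i <;> fin_cases j <;>
      norm_num [Matrix.mul_apply, Fin.sum_univ_succ, Matrix.vecHead, Matrix.vecTail, Matrix.cons_val_two]
  rw [this, Matrix.zero_kronecker]

lemma hAXA (d : ℕ) : Amat d * Xmat d * (Amat d)ᵀ = (-2:ℝ) • J2mat d := by
  simp only [Amat, Xmat, J2mat, kt, km]
  have : (!![1, -1, 0, 0; 0, 0, 1, -1] : Matrix (Fin 2) (Fin 4) ℝ) *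
      (!![0, 0, 0, 1; 0, 0, 1, 0; 0, -1, 0, 0; -1, 0, 0, 0] : Matrix (Fin 4) (Fin 4) ℝ) *
      (!![1, -1, 0, 0; 0, 0, 1, -1] : Matrix (Fin 2) (Fin 4) ℝ)ᵀ
      = (-2:ℝ) • (!![0, 1; -1, 0] : Matrix (Fin 2) (Fin 2) ℝ) := by
    ext i j; fin_cases i <;> fin_cases j <;>
      norm_num [Matrix.mul_apply, Fin.sum_univ_succ, Matrix.vecHead, Matrix.vecTail, Matrix.cons_val_two]
  rw [this, ks]

end SemiexplicitAux

set_option maxHeartbeats 1000000 in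
/-- Linearized symplecticity of the semiexplicit method: if `M` is symplectic,
`S = ι + Aᵀ L`, and `A M S v = -A S v` for all `v`, then `T = (1/2) B M S`
is symplectic: `Tᵀ J_{2d} T = J_{2d}`. -/
theorem semiexplicit_linearized_symplectic (d : ℕ)
    (M : Matrix (Fin 4 × Fin d) (Fin 4 × Fin d) ℝ)
    (L : Matrix (Fin 2 × Fin d) (Fin 2 × Fin d) ℝ)
    (S : Matrix (Fin 4 × Fin d) (Fin 2 × Fin d) ℝ)
    (T : Matrix (Fin 2 × Fin d) (Fin 2 × Fin d) ℝ)
    (hM : Mᵀ * J4mat d * M = J4mat d)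
    (hS : S = iotaMat d + (Amat d)ᵀ * L)
    (hAMS : ∀ v : Fin 2 × Fin d → ℝ,
      (Amat d).mulVec (M.mulVec (S.mulVec v)) = -((Amat d).mulVec (S.mulVec v)))
    (hT : T = ((1 : ℝ)/2) • (Bmat d * M * S)) :
    Tᵀ * J2mat d * T = J2mat d := by
  open SemiexplicitAux in
  -- convert the hypothesis on vectors into a matrix identity
  have hAMSmat : Amat d * M * S = -(Amat d * S) := by
    ext i j
    have h := congrFun (hAMS (Pi.single j 1)) i
    simp only [Matrix.mulVec_mulVec] at h
    simp only [Matrix.mulVec_single_one] at h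
    simpa only [Matrix.col_apply, Matrix.neg_apply, Pi.neg_apply, Matrix.mul_assoc] using h
  -- A * S = 2 • L
  have hAS : Amat d * S = (2:ℝ) • L := by
    rw [hS, Matrix.mul_add, hAiota, ← Matrix.mul_assoc, hAAT, zero_add,
      Matrix.smul_mul, Matrix.one_mul]
  set P := M * S with hP
  have hAP : Amat d * P = (-2:ℝ) • L := by
    rw [hP, ← Matrix.mul_assoc, hAMSmat, hAS, ← neg_smul]
  -- Pᵀ J4 P = Sᵀ J4 S
  have hPJP : Pᵀ * J4mat d * P = Sᵀ * J4mat d * S := by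
    rw [hP, Matrix.transpose_mul]
    calc Sᵀ * Mᵀ * J4mat d * (M * S)
        = Sᵀ * (Mᵀ * J4mat d * M) * S := by
          simp only [Matrix.mul_assoc]
      _ = Sᵀ * J4mat d * S := by rw [hM, Matrix.mul_assoc]
  set K := Lᵀ * J2mat d * L with hK
  -- Sᵀ X S = 2 • J2 - 2 • K
  have hSXS : Sᵀ * Xmat d * S = (2:ℝ) • J2mat d - (2:ℝ) • K := by
    rw [hS]
    simp only [Matrix.transpose_add, Matrix.transpose_mul, Matrix.transpose_transpose,
      Matrix.add_mul, Matrix.mul_add]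
    have e1 : (iotaMat d)ᵀ * Xmat d * iotaMat d = (2:ℝ) • J2mat d := hiXi d
    have e2 : (iotaMat d)ᵀ * Xmat d * ((Amat d)ᵀ * L) = 0 := by
      rw [← Matrix.mul_assoc, hiXA, Matrix.zero_mul]
    have e3 : Lᵀ * Amat d * Xmat d * iotaMat d = 0 := by
      rw [Matrix.mul_assoc, Matrix.mul_assoc, ← Matrix.mul_assoc (Amat d), hAXi,
        Matrix.mul_zero]
    have e4 : Lᵀ * Amat d * Xmat d * ((Amat d)ᵀ * L) = (-2:ℝ) • K := by
      calc Lᵀ * Amat d * Xmat d * ((Amat d)ᵀ * L)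
          = Lᵀ * (Amat d * Xmat d * (Amat d)ᵀ) * L := by
            simp only [Matrix.mul_assoc]
        _ = Lᵀ * ((-2:ℝ) • J2mat d) * L := by rw [hAXA]
        _ = (-2:ℝ) • K := by
            rw [hK, Matrix.mul_smul, Matrix.smul_mul]
    calc (iotaMat d)ᵀ * Xmat d * iotaMat d + Lᵀ * Amat d * Xmat d * iotaMat d +
        ((iotaMat d)ᵀ * Xmat d * ((Amat d)ᵀ * L) + Lᵀ * Amat d * Xmat d * ((Amat d)ᵀ * L))
        = (2:ℝ) • J2mat d + 0 + (0 + (-2:ℝ) • K) := by rw [e1, e2, e3, e4]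
      _ = (2:ℝ) • J2mat d - (2:ℝ) • K := by
          rw [add_zero, zero_add, neg_smul, ← sub_eq_add_neg]
  -- Sᵀ J4 S = Sᵀ X S + 4 • K
  have hSJS : Sᵀ * J4mat d * S = (2:ℝ) • J2mat d + (2:ℝ) • K := by
    have hJ4 : J4mat d = Xmat d + (Amat d)ᵀ * J2mat d * Amat d := by
      rw [← hAJA]; abel
    have : Sᵀ * ((Amat d)ᵀ * J2mat d * Amat d) * S = (4:ℝ) • K := by
      calc Sᵀ * ((Amat d)ᵀ * J2mat d * Amat d) * S
          = (Amat d * S)ᵀ * J2mat d * (Amat d * S) := by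
            rw [Matrix.transpose_mul (Amat d) S]; simp only [Matrix.mul_assoc]
        _ = ((2:ℝ) • L)ᵀ * J2mat d * ((2:ℝ) • L) := by rw [hAS]
        _ = (4:ℝ) • K := by
            rw [Matrix.transpose_smul, Matrix.smul_mul, Matrix.mul_smul,
              Matrix.smul_mul, smul_smul, hK]
            norm_num
    rw [hJ4, Matrix.mul_add, Matrix.add_mul, hSXS, this]
    rw [show ((4:ℝ) • K : Matrix (Fin 2 × Fin d) (Fin 2 × Fin d) ℝ)
        = (2:ℝ) • K + (2:ℝ) • K by rw [← add_smul]; norm_num]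
    abel
  -- Pᵀ X P = Sᵀ J4 S - 4 • K
  have hPXP : Pᵀ * Xmat d * P = (2:ℝ) • J2mat d - (2:ℝ) • K := by
    have hX : Xmat d = J4mat d - (Amat d)ᵀ * J2mat d * Amat d := by
      rw [← hAJA]; abel
    have hc : Pᵀ * ((Amat d)ᵀ * J2mat d * Amat d) * P = (4:ℝ) • K := by
      calc Pᵀ * ((Amat d)ᵀ * J2mat d * Amat d) * P
          = (Amat d * P)ᵀ * J2mat d * (Amat d * P) := by
            rw [Matrix.transpose_mul (Amat d) P]; simp only [Matrix.mul_assoc]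
        _ = ((-2:ℝ) • L)ᵀ * J2mat d * ((-2:ℝ) • L) := by rw [hAP]
        _ = (4:ℝ) • K := by
            rw [Matrix.transpose_smul, Matrix.smul_mul, Matrix.mul_smul,
              Matrix.smul_mul, smul_smul, hK]
            norm_num
    rw [hX, Matrix.mul_sub, Matrix.sub_mul, hc, hPJP, hSJS]
    rw [show ((4:ℝ) • K : Matrix (Fin 2 × Fin d) (Fin 2 × Fin d) ℝ)
        = (2:ℝ) • K + (2:ℝ) • K by rw [← add_smul]; norm_num]
    abel
  -- assemble
  have hTP : T = ((1:ℝ)/2) • (Bmat d * P) := by rw [hT, hP, Matrix.mul_assoc]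
  rw [hTP, Matrix.transpose_smul, Matrix.smul_mul, Matrix.mul_smul, Matrix.smul_mul,
    smul_smul]
  have : (Bmat d * P)ᵀ * J2mat d * (Bmat d * P) = (4:ℝ) • J2mat d := by
    calc (Bmat d * P)ᵀ * J2mat d * (Bmat d * P)
        = Pᵀ * ((Bmat d)ᵀ * J2mat d * Bmat d) * P := by
          rw [Matrix.transpose_mul (Bmat d) P]; simp only [Matrix.mul_assoc]
      _ = Pᵀ * (J4mat d + Xmat d) * P := by rw [hBJB]
      _ = Pᵀ * J4mat d * P + Pᵀ * Xmat d * P := by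
          rw [Matrix.mul_add, Matrix.add_mul]
      _ = (4:ℝ) • J2mat d := by
          rw [hPJP, hSJS, hPXP]
          rw [show ((4:ℝ) • J2mat d : Matrix (Fin 2 × Fin d) (Fin 2 × Fin d) ℝ)
              = (2:ℝ) • J2mat d + (2:ℝ) • J2mat d by rw [← add_smul]; norm_num]
          abel
  rw [this, smul_smul]
  norm_num
end
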